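/- Let F ∈ S_d be a form and let e ≤ d. A point [l] ∈ P(S_1) is a base point of the linear system (F^⊥)_e (i.e., every degree-e element of F^⊥ vanishes at [l]) if and only if there exists a differential operator ∂ ∈ S*_{d-e} such that ∂ F = l^e. -/

import Mathlib

open MvPolynomial

noncomputable section WaringSetup

variable {k : Type} [Field k] {n : ℕ}

/-- The linear form `∑ aᵢ xᵢ` with coefficient vector `a`. -/
def linForm (a : Fin n → k) : MvPolynomial (Fin n) k :=
  ∑ i, C (a i) * X i

/-- A subset of the space `S₁` of linear forms (identified with the space of coefficient
vectors) is homogeneous Zariski closed if it is the common zero locus of a set of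
homogeneous polynomial functions. -/
def HomZariskiClosed (V : Set (Fin n → k)) : Prop :=
  ∃ P : Set (MvPolynomial (Fin n) k),
    (∀ p ∈ P, ∃ e : ℕ, p.IsHomogeneous e) ∧
    V = {a | ∀ p ∈ P, eval a p = 0}

/-- `F` can be written as a polynomial in `m` linear forms. -/
def WritableIn (m : ℕ) (F : MvPolynomial (Fin n) k) : Prop :=
  ∃ y : Fin m → MvPolynomial (Fin n) k,
    (∀ j, (y j).IsHomogeneous 1) ∧ ∃ G : MvPolynomial (Fin m) k, F = aeval y G

/-- `F` essentially depends on `n` variables: after any linear change of coordinates it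
cannot be written using fewer than `n` variables. -/
def EssDep (F : MvPolynomial (Fin n) k) : Prop :=
  ∀ m : ℕ, m < n → ¬ WritableIn m F

/-- `OrkV d F V` is the minimal number `m` such that `F` is a sum of `m` `d`-th powers of
linear forms lying outside `V` (and `⊤` if there is no such presentation). -/
def OrkV (d : ℕ) (F : MvPolynomial (Fin n) k) (V : Set (Fin n → k)) : ℕ∞ :=
  sInf ((fun m : ℕ => (m : ℕ∞)) ''
    {m : ℕ | ∃ l : Fin m → (Fin n → k), (∀ i, l i ∉ V) ∧ F = ∑ i, linForm (l i) ^ d})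

/-- The open Waring rank of a form `F`: the supremum of `OrkV d F V` over all homogeneous
Zariski-closed proper subsets `V ⊊ S₁`. -/
def Ork (d : ℕ) (F : MvPolynomial (Fin n) k) : ℕ∞ :=
  ⨆ V : {V : Set (Fin n → k) // HomZariskiClosed V ∧ V ≠ Set.univ}, OrkV d F V.1

/-- The open Waring rank `Ork(n, d)`: the supremum of `Ork F` over all forms `F` of degree
`d` essentially depending on `n` variables. -/
def OrkND (k : Type) [Field k] (n d : ℕ) : ℕ∞ :=
  ⨆ F : {F : MvPolynomial (Fin n) k // F.IsHomogeneous d ∧ EssDep F}, Ork d F.1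

/-- Apply the constant-coefficient differential operator `D` (a polynomial, whose variable
`i` is read as `∂/∂xᵢ`) to the polynomial `F`. -/
def contract (D F : MvPolynomial (Fin n) k) : MvPolynomial (Fin n) k :=
  ∑ s ∈ D.support, D.coeff s •
    ((List.finRange n).foldr (fun i G => (fun H => pderiv i H)^[s i] G) F)

/-- Polynomial functions on the affine space of polynomials: the subalgebra of functions
generated by the coefficient functionals. -/
def PolyFun (n : ℕ) (k : Type) [Field k] : Subalgebra k (MvPolynomial (Fin n) k → k) :=
  Algebra.adjoin k (Set.range fun s : Fin n →₀ ℕ => fun F => coeff s F)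

end WaringSetup
noncomputable section Aux12

open MvPolynomial

variable {k : Type} [Field k] {n : ℕ}

/-- partial derivative as a linear endomorphism -/
def pd (i : Fin n) : Module.End k (MvPolynomial (Fin n) k) :=
  (pderiv i).toLinearMap

lemma pd_apply (i : Fin n) (f : MvPolynomial (Fin n) k) : pd i f = pderiv i f := rfl

lemma pderiv_comm (i j : Fin n) (p : MvPolynomial (Fin n) k) :
    pderiv i (pderiv j p) = pderiv j (pderiv i p) := by
  induction p using MvPolynomial.induction_on' with
  | monomial u c =>
    by_cases h : i = j
    · subst h; rfl
    · rw [pderiv_monomial, pderiv_monomial, pderiv_monomial, pderiv_monomial]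
      have h1 : (u - Finsupp.single j 1 : Fin n →₀ ℕ) i = u i := by
        rw [Finsupp.tsub_apply, Finsupp.single_apply, if_neg (Ne.symm h), Nat.sub_zero]
      have h2 : (u - Finsupp.single i 1 : Fin n →₀ ℕ) j = u j := by
        rw [Finsupp.tsub_apply, Finsupp.single_apply, if_neg h, Nat.sub_zero]
      rw [h1, h2, tsub_tsub, tsub_tsub, add_comm, mul_right_comm]
  | add p q hp hq => simp only [map_add, hp, hq]

lemma pd_comm (i j : Fin n) : Commute (pd (k := k) i) (pd j) := by
  apply LinearMap.ext
  intro p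
  simp only [Module.End.mul_apply, pd_apply]
  exact pderiv_comm i j p

/-- Iterated derivative operator associated to an exponent vector and a list of variables -/
def dopL (L : List (Fin n)) (s : Fin n →₀ ℕ) : Module.End k (MvPolynomial (Fin n) k) :=
  L.foldr (fun i A => pd i ^ s i * A) 1

def dop (s : Fin n →₀ ℕ) : Module.End k (MvPolynomial (Fin n) k) :=
  dopL (List.finRange n) s

lemma dopL_cons (i : Fin n) (L : List (Fin n)) (s : Fin n →₀ ℕ) :
    dopL (k := k) (i :: L) s = pd i ^ s i * dopL L s := rfl

lemma dopL_apply (L : List (Fin n)) (s : Fin n →₀ ℕ) (F : MvPolynomial (Fin n) k) :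
    dopL L s F = L.foldr (fun i G => (fun H => pderiv i H)^[s i] G) F := by
  induction L with
  | nil => rfl
  | cons i L ih =>
    rw [dopL_cons, Module.End.mul_apply, ih, List.foldr_cons, Module.End.pow_apply]
    rfl

lemma contract_eq (D F : MvPolynomial (Fin n) k) :
    contract D F = ∑ s ∈ D.support, D.coeff s • dop s F := by
  unfold contract dop
  exact Finset.sum_congr rfl fun s _ => by rw [dopL_apply]

/-- The endomorphism given by contraction with `D`. -/
def cE (D : MvPolynomial (Fin n) k) : Module.End k (MvPolynomial (Fin n) k) :=
  ∑ s ∈ D.support, D.coeff s • dop s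

lemma contract_eq' (D F : MvPolynomial (Fin n) k) : contract D F = cE D F := by
  rw [contract_eq, cE, LinearMap.sum_apply]
  exact Finset.sum_congr rfl fun s _ => by rw [LinearMap.smul_apply]

lemma contract_zero_right (D : MvPolynomial (Fin n) k) : contract D 0 = 0 := by
  rw [contract_eq']; exact map_zero _

lemma contract_add_right (D F G : MvPolynomial (Fin n) k) :
    contract D (F + G) = contract D F + contract D G := by
  rw [contract_eq', contract_eq', contract_eq']; exact map_add _ _ _

lemma contract_smul_right (D : MvPolynomial (Fin n) k) (c : k) (F : MvPolynomial (Fin n) k) :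
    contract D (c • F) = c • contract D F := by
  rw [contract_eq', contract_eq']; exact map_smul _ _ _

lemma contract_eq_sum_of_subset {D : MvPolynomial (Fin n) k} {T : Finset (Fin n →₀ ℕ)}
    (h : D.support ⊆ T) (F : MvPolynomial (Fin n) k) :
    contract D F = ∑ s ∈ T, D.coeff s • dop s F := by
  rw [contract_eq]
  exact Finset.sum_subset h fun s _ hs => by
    rw [MvPolynomial.notMem_support_iff.mp hs, zero_smul]

lemma contract_add_left (D₁ D₂ F : MvPolynomial (Fin n) k) :
    contract (D₁ + D₂) F = contract D₁ F + contract D₂ F := by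
  classical
  rw [contract_eq_sum_of_subset (MvPolynomial.support_add) F,
    contract_eq_sum_of_subset (T := D₁.support ∪ D₂.support) Finset.subset_union_left F,
    contract_eq_sum_of_subset (T := D₁.support ∪ D₂.support) Finset.subset_union_right F,
    ← Finset.sum_add_distrib]
  exact Finset.sum_congr rfl fun s _ => by rw [MvPolynomial.coeff_add, add_smul]

lemma contract_smul_left (c : k) (D F : MvPolynomial (Fin n) k) :
    contract (c • D) F = c • contract D F := by
  rw [contract_eq_sum_of_subset (MvPolynomial.support_smul) F, contract_eq, Finset.smul_sum]
  exact Finset.sum_congr rfl fun s _ => by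
    rw [MvPolynomial.coeff_smul, smul_eq_mul, mul_smul]

lemma contract_monomial (s : Fin n →₀ ℕ) (c : k) (F : MvPolynomial (Fin n) k) :
    contract (monomial s c) F = c • dop s F := by
  classical
  rw [contract_eq, MvPolynomial.support_monomial]
  by_cases h : c = 0
  · simp [h]
  · rw [if_neg h, Finset.sum_singleton, MvPolynomial.coeff_monomial, if_pos rfl]

lemma commute_pd_dopL (i : Fin n) (L : List (Fin n)) (s : Fin n →₀ ℕ) :
    Commute (pd (k := k) i) (dopL L s) := by
  induction L with
  | nil => exact Commute.one_right _
  | cons j L ih => exact ((pd_comm i j).pow_right _).mul_right ih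

lemma dopL_add (L : List (Fin n)) (s t : Fin n →₀ ℕ) :
    dopL (k := k) L (s + t) = dopL L s * dopL L t := by
  induction L with
  | nil => simp [dopL]
  | cons i L ih =>
    rw [dopL_cons, dopL_cons, dopL_cons, ih, Finsupp.add_apply, pow_add]
    have hc : Commute (pd (k := k) i ^ t i) (dopL L s) :=
      (commute_pd_dopL i L s).pow_left (t i)
    exact hc.mul_mul_mul_comm _ _

lemma dop_add (s t : Fin n →₀ ℕ) : dop (k := k) (s + t) = dop s * dop t :=
  dopL_add _ s t

lemma contract_monomial_mul (u : Fin n →₀ ℕ) (a : k) (E F : MvPolynomial (Fin n) k) :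
    contract (monomial u a * E) F = a • dop u (contract E F) := by
  induction E using MvPolynomial.induction_on' with
  | monomial v b =>
    rw [MvPolynomial.monomial_mul, contract_monomial, contract_monomial, dop_add,
      Module.End.mul_apply, map_smul, smul_smul]
  | add p q hp hq =>
    rw [mul_add, contract_add_left, hp, hq, contract_add_left, map_add, smul_add]

lemma contract_mul (D E F : MvPolynomial (Fin n) k) :
    contract (D * E) F = contract D (contract E F) := by
  induction D using MvPolynomial.induction_on' with
  | monomial u a => rw [contract_monomial_mul, contract_monomial]
  | add p q hp hq => rw [add_mul, contract_add_left, hp, hq, contract_add_left]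

lemma contract_comm (D E F : MvPolynomial (Fin n) k) :
    contract D (contract E F) = contract E (contract D F) := by
  rw [← contract_mul, ← contract_mul, mul_comm]

lemma pd_pow_monomial (i : Fin n) (m : ℕ) (t : Fin n →₀ ℕ) (c : k) :
    (pd i ^ m) (monomial t c)
      = monomial (t - Finsupp.single i m) (c * ((t i).descFactorial m : k)) := by
  induction m with
  | zero => simp
  | succ m ih =>
    rw [pow_succ', Module.End.mul_apply, ih, pd_apply, pderiv_monomial]
    have h1 : (t - Finsupp.single i m) i = t i - m := by
      rw [Finsupp.tsub_apply, Finsupp.single_eq_same]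
    rw [h1, tsub_tsub, ← Finsupp.single_add, Nat.descFactorial_succ]
    push_cast
    ring_nf

lemma listsum_single_apply_eq_zero {L : List (Fin n)} {i : Fin n} (hi : i ∉ L)
    (s : Fin n →₀ ℕ) : ((L.map fun j => Finsupp.single j (s j)).sum) i = 0 := by
  induction L with
  | nil => rfl
  | cons j L ih =>
    simp only [List.map_cons, List.sum_cons, Finsupp.add_apply]
    rw [ih (fun h => hi (List.mem_cons_of_mem _ h)),
      Finsupp.single_apply, if_neg (fun h => hi (by rw [← h]; exact List.mem_cons_self)), add_zero]

lemma dopL_monomial (L : List (Fin n)) (hL : L.Nodup) (s t : Fin n →₀ ℕ) (c : k) :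
    dopL L s (monomial t c)
      = monomial (t - (L.map fun i => Finsupp.single i (s i)).sum)
          (c * (L.map fun i => ((t i).descFactorial (s i) : k)).prod) := by
  induction L with
  | nil => simp [dopL]
  | cons i L ih =>
    obtain ⟨hiL, hLnd⟩ := List.nodup_cons.mp hL
    rw [dopL_cons, Module.End.mul_apply, ih hLnd, pd_pow_monomial]
    have h1 : (t - (L.map fun j => Finsupp.single j (s j)).sum) i = t i := by
      rw [Finsupp.tsub_apply, listsum_single_apply_eq_zero hiL, Nat.sub_zero]
    rw [h1]
    simp only [List.map_cons, List.sum_cons, List.prod_cons]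
    rw [tsub_tsub, add_comm ((Finsupp.single i (s i)))]
    ring_nf

lemma dop_monomial (s t : Fin n →₀ ℕ) (c : k) :
    dop s (monomial t c)
      = monomial (t - s) (c * ∏ i, ((t i).descFactorial (s i) : k)) := by
  rw [dop, dopL_monomial _ (List.nodup_finRange n)]
  have h1 : ((List.finRange n).map fun i => Finsupp.single i (s i)).sum = s := by
    rw [← Fin.sum_univ_def, Finsupp.univ_sum_single]
  have h2 : ((List.finRange n).map fun i => ((t i).descFactorial (s i) : k)).prod
      = ∏ i, ((t i).descFactorial (s i) : k) := by
    rw [Fin.prod_univ_def]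
  rw [h1, h2]

lemma degree_eq_sum (d : Fin n →₀ ℕ) : d.degree = ∑ i, d i := by
  rw [Finsupp.degree]
  exact Finset.sum_subset (Finset.subset_univ _)
    (fun i _ h => Finsupp.notMem_support_iff.mp h)

lemma homog_degree {φ : MvPolynomial (Fin n) k} {m : ℕ} (h : φ.IsHomogeneous m)
    {d : Fin n →₀ ℕ} (hd : MvPolynomial.coeff d φ ≠ 0) : d.degree = m := by
  rw [Finsupp.degree_eq_weight_one]
  exact h hd

lemma degree_sub {s t : Fin n →₀ ℕ} (h : s ≤ t) :
    (t - s).degree = t.degree - s.degree := by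
  rw [degree_eq_sum, degree_eq_sum, degree_eq_sum]
  have h1 : ∑ i, (t - s) i + ∑ i, s i = ∑ i, t i := by
    rw [← Finset.sum_add_distrib]
    exact Finset.sum_congr rfl fun i _ => by
      rw [Finsupp.tsub_apply]
      exact Nat.sub_add_cancel (Finsupp.le_def.mp h i)
  omega

lemma eq_of_le_of_degree_eq {s t : Fin n →₀ ℕ} (h : s ≤ t) (hd : s.degree = t.degree) :
    s = t := by
  ext i
  by_contra hne
  have hlt : s i < t i := lt_of_le_of_ne (Finsupp.le_def.mp h i) hne
  have : ∑ i, s i < ∑ i, t i :=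
    Finset.sum_lt_sum (fun j _ => Finsupp.le_def.mp h j) ⟨i, Finset.mem_univ i, hlt⟩
  rw [degree_eq_sum, degree_eq_sum] at hd
  omega

lemma exists_lt_of_not_le {s t : Fin n →₀ ℕ} (h : ¬ s ≤ t) : ∃ i, t i < s i := by
  by_contra hc
  push_neg at hc
  exact h (Finsupp.le_def.mpr hc)

lemma dop_isHomogeneous {s t : Fin n →₀ ℕ} {p m : ℕ} (hs : s.degree = p)
    (ht : t.degree = m) (c : k) : (dop s (monomial t c)).IsHomogeneous (m - p) := by
  by_cases hle : s ≤ t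
  · rw [dop_monomial]
    exact MvPolynomial.isHomogeneous_monomial _ (by rw [degree_sub hle, hs, ht])
  · obtain ⟨i, hi⟩ := exists_lt_of_not_le hle
    rw [dop_monomial]
    have : (∏ j, (((t j).descFactorial (s j) : ℕ) : k)) = 0 := by
      apply Finset.prod_eq_zero (Finset.mem_univ i)
      rw [Nat.descFactorial_eq_zero_iff_lt.mpr hi, Nat.cast_zero]
    rw [this, mul_zero, MvPolynomial.monomial_zero]
    exact MvPolynomial.isHomogeneous_zero _ _ _

lemma contract_isHomogeneous {D F : MvPolynomial (Fin n) k} {p m : ℕ}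
    (hD : D.IsHomogeneous p) (hF : F.IsHomogeneous m) :
    (contract D F).IsHomogeneous (m - p) := by
  rw [contract_eq]
  apply MvPolynomial.IsHomogeneous.sum
  intro s hs
  rw [MvPolynomial.smul_eq_C_mul]
  apply MvPolynomial.IsHomogeneous.C_mul
  conv_lhs => rw [F.as_sum]
  rw [map_sum]
  apply MvPolynomial.IsHomogeneous.sum
  intro t ht
  exact dop_isHomogeneous (homog_degree hD (MvPolynomial.mem_support_iff.mp hs))
    (homog_degree hF (MvPolynomial.mem_support_iff.mp ht)) _

lemma dop_eq_C {G : MvPolynomial (Fin n) k} {m : ℕ} (hG : G.IsHomogeneous m)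
    {s : Fin n →₀ ℕ} (hs : s.degree = m) :
    dop s G = C ((∏ i, ((s i).factorial : k)) * G.coeff s) := by
  conv_lhs => rw [G.as_sum, map_sum]
  rw [Finset.sum_eq_single s]
  · rw [dop_monomial, tsub_self]
    have : (∏ i, (((s i).descFactorial (s i) : ℕ) : k)) = ∏ i, ((s i).factorial : k) :=
      Finset.prod_congr rfl fun i _ => by rw [Nat.descFactorial_self]
    rw [this, ← MvPolynomial.monomial_zero', mul_comm]
  · intro t ht hts
    have hdegt : t.degree = m := homog_degree hG (MvPolynomial.mem_support_iff.mp ht)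
    have hnle : ¬ s ≤ t := fun hle =>
      hts (eq_of_le_of_degree_eq hle (by rw [hs, hdegt])).symm
    obtain ⟨i, hi⟩ := exists_lt_of_not_le hnle
    rw [dop_monomial]
    have : (∏ j, (((t j).descFactorial (s j) : ℕ) : k)) = 0 := by
      apply Finset.prod_eq_zero (Finset.mem_univ i)
      rw [Nat.descFactorial_eq_zero_iff_lt.mpr hi, Nat.cast_zero]
    rw [this, mul_zero, MvPolynomial.monomial_zero]
  · intro hsG
    rw [MvPolynomial.notMem_support_iff.mp hsG, MvPolynomial.monomial_zero, map_zero]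

lemma factorial_prod_ne_zero [CharZero k] (s : Fin n →₀ ℕ) :
    (∏ i, ((s i).factorial : k)) ≠ 0 := by
  apply Finset.prod_ne_zero_iff.mpr
  intro i _
  exact Nat.cast_ne_zero.mpr (Nat.factorial_ne_zero _)

lemma exists_contract_ne [CharZero k] {G : MvPolynomial (Fin n) k} {m : ℕ}
    (hG : G.IsHomogeneous m) (h0 : G ≠ 0) :
    ∃ D : MvPolynomial (Fin n) k, D.IsHomogeneous m ∧ (contract D G).coeff 0 ≠ 0 := by
  obtain ⟨s, hs⟩ := MvPolynomial.support_nonempty.mpr h0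
  have hdeg : s.degree = m := homog_degree hG (MvPolynomial.mem_support_iff.mp hs)
  refine ⟨monomial s 1, MvPolynomial.isHomogeneous_monomial 1 hdeg, ?_⟩
  rw [contract_monomial, one_smul, dop_eq_C hG hdeg, MvPolynomial.coeff_zero_C]
  exact mul_ne_zero (factorial_prod_ne_zero s) (MvPolynomial.mem_support_iff.mp hs)

lemma contract_monomial_right {E : MvPolynomial (Fin n) k} {m : ℕ}
    (hE : E.IsHomogeneous m) {s : Fin n →₀ ℕ} (hs : s.degree = m) :
    contract E (monomial s (1 : k)) = C (E.coeff s * ∏ i, ((s i).factorial : k)) := by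
  classical
  rw [contract_eq, Finset.sum_eq_single s]
  · rw [dop_eq_C (MvPolynomial.isHomogeneous_monomial 1 hs) hs, MvPolynomial.coeff_monomial,
      if_pos rfl, mul_one, MvPolynomial.smul_eq_C_mul, ← map_mul, mul_comm]
  · intro t ht hts
    rw [dop_eq_C (MvPolynomial.isHomogeneous_monomial 1 hs)
        (homog_degree hE (MvPolynomial.mem_support_iff.mp ht)),
      MvPolynomial.coeff_monomial, if_neg (fun h => hts h.symm), mul_zero, map_zero, smul_zero]
  · intro hsE
    rw [MvPolynomial.notMem_support_iff.mp hsE, zero_smul]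

lemma pderiv_linForm (a : Fin n → k) (i : Fin n) : pderiv i (linForm a) = C (a i) := by
  classical
  unfold linForm
  rw [map_sum, Finset.sum_eq_single i]
  · rw [pderiv_C_mul, pderiv_X_self, mul_one]
  · intro j _ hj
    rw [pderiv_C_mul, pderiv_X_of_ne hj, mul_zero]
  · intro h; exact absurd (Finset.mem_univ i) h

lemma pd_pow_linpow (a : Fin n → k) (i : Fin n) (j q : ℕ) (c : k) :
    (pd i ^ j) (C c * linForm a ^ q)
      = C (c * (q.descFactorial j : k) * a i ^ j) * linForm a ^ (q - j) := by
  induction j with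
  | zero => simp
  | succ j ih =>
    rw [pow_succ', Module.End.mul_apply, ih, pd_apply, pderiv_C_mul, pderiv_pow,
      pderiv_linForm]
    have hq : q - j - 1 = q - (j + 1) := by omega
    have hdf : (q.descFactorial (j + 1) : k) = ((q - j : ℕ) : k) * (q.descFactorial j : k) := by
      rw [Nat.descFactorial_succ]; push_cast; ring
    rw [hq, hdf, ← MvPolynomial.C_eq_coe_nat (q - j)]
    simp only [map_mul, map_pow]
    ring

lemma nat_descFactorial_add (m K p : ℕ) :
    m.descFactorial (p + K) = (m - K).descFactorial p * m.descFactorial K := by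
  induction p with
  | zero => simp
  | succ p ih =>
    have h1 : p + 1 + K = (p + K) + 1 := by omega
    rw [h1, Nat.descFactorial_succ, ih, Nat.descFactorial_succ]
    have h2 : m - (p + K) = m - K - p := by omega
    rw [h2]
    ring

lemma dopL_linpow (a : Fin n → k) (L : List (Fin n)) (s : Fin n →₀ ℕ) (q : ℕ) (c : k) :
    dopL L s (C c * linForm a ^ q)
      = C (c * (q.descFactorial (L.map fun i => s i).sum : k)
            * (L.map fun i => a i ^ s i).prod)
          * linForm a ^ (q - (L.map fun i => s i).sum) := by
  induction L with
  | nil => simp [dopL]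
  | cons i L ih =>
    rw [dopL_cons, Module.End.mul_apply, ih, pd_pow_linpow]
    simp only [List.map_cons, List.sum_cons, List.prod_cons]
    have h1 : q - (L.map fun i => s i).sum - s i = q - (s i + (L.map fun i => s i).sum) := by
      omega
    have h2 : (q.descFactorial (s i + (L.map fun j => s j).sum) : k)
        = ((q - (L.map fun j => s j).sum).descFactorial (s i) : k)
          * (q.descFactorial (L.map fun j => s j).sum : k) := by
      rw [nat_descFactorial_add]; push_cast; ring
    rw [h1, h2]
    congr 1
    ac_rfl

lemma dop_linpow (a : Fin n → k) {s : Fin n →₀ ℕ} {e : ℕ} (hs : s.degree = e) :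
    dop s (linForm a ^ e) = C ((e.factorial : k) * ∏ i, a i ^ s i) := by
  have h1 : ((List.finRange n).map fun i => s i).sum = e := by
    rw [← Fin.sum_univ_def, ← degree_eq_sum]; exact hs
  have h0 : linForm a ^ e = C (1 : k) * linForm a ^ e := by rw [map_one, one_mul]
  rw [dop, h0, dopL_linpow, h1, Nat.sub_self, pow_zero, mul_one, Nat.descFactorial_self,
    one_mul, ← Fin.prod_univ_def]

lemma contract_linpow (a : Fin n → k) {E : MvPolynomial (Fin n) k} {e : ℕ}
    (hE : E.IsHomogeneous e) :
    contract E (linForm a ^ e) = C ((e.factorial : k) * eval a E) := by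
  rw [contract_eq, MvPolynomial.eval_eq', Finset.mul_sum, map_sum]
  apply Finset.sum_congr rfl
  intro s hs
  rw [dop_linpow a (homog_degree hE (MvPolynomial.mem_support_iff.mp hs)),
    MvPolynomial.smul_eq_C_mul, ← map_mul]
  congr 1
  ring

instance homogeneousSubmodule_finiteDimensional (m : ℕ) :
    FiniteDimensional k (homogeneousSubmodule (Fin n) k m) := by
  apply Submodule.finiteDimensional_of_le (S₂ := MvPolynomial.restrictTotalDegree (Fin n) k m)
  intro p hp
  rw [MvPolynomial.mem_restrictTotalDegree]
  exact ((MvPolynomial.mem_homogeneousSubmodule _ _).mp hp).totalDegree_le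

lemma linForm_isHomogeneous (a : Fin n → k) : (linForm a).IsHomogeneous 1 := by
  unfold linForm
  apply MvPolynomial.IsHomogeneous.sum
  intro i _
  exact MvPolynomial.isHomogeneous_C_mul_X _ _

end Aux12
/-- Let `F ∈ S_d` and `e ≤ d`. A point `[l] ∈ ℙ(S₁)` is a base point of the linear
system `(F^⊥)_e` iff there is a differential operator `∂ ∈ S*_{d-e}` with `∂F = l^e`. -/
theorem stmt_12 (k : Type) [Field k] [IsAlgClosed k] [CharZero k]
    (n d e : ℕ) (hed : e ≤ d)
    (F : MvPolynomial (Fin n) k) (hF : F.IsHomogeneous d)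
    (a : Fin n → k) (ha : a ≠ 0) :
    (∀ D : MvPolynomial (Fin n) k, D.IsHomogeneous e → contract D F = 0 → eval a D = 0)
      ↔ ∃ D : MvPolynomial (Fin n) k,
          D.IsHomogeneous (d - e) ∧ contract D F = linForm a ^ e := by
  have hfact : ((e.factorial : k)) ≠ 0 := Nat.cast_ne_zero.mpr (Nat.factorial_ne_zero e)
  constructor
  · intro hyp
    -- the restriction of contraction against F, as a linear map between spaces of forms
    set V₂ := homogeneousSubmodule (Fin n) k e with hV₂
    have hde : d - (d - e) = e := by omega
    let φ : homogeneousSubmodule (Fin n) k (d - e) →ₗ[k] homogeneousSubmodule (Fin n) k e :=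
      { toFun := fun D => ⟨contract D.1 F, by
          have h := contract_isHomogeneous D.2 hF
          rwa [hde] at h⟩
        map_add' := fun D₁ D₂ => Subtype.ext (contract_add_left _ _ _)
        map_smul' := fun c D => Subtype.ext (contract_smul_left _ _ _) }
    -- the apolarity pairing in degree e
    let B : V₂ →ₗ[k] Module.Dual k V₂ :=
      { toFun := fun E =>
          { toFun := fun G => (contract E.1 G.1).coeff 0
            map_add' := fun G₁ G₂ => by
              rw [← MvPolynomial.coeff_add, ← contract_add_right]; rfl
            map_smul' := fun c G => by
              simp only [RingHom.id_apply, smul_eq_mul]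
              rw [show ((c • G : V₂) : MvPolynomial (Fin n) k) = c • (G : MvPolynomial (Fin n) k)
                from rfl, contract_smul_right, MvPolynomial.coeff_smul, smul_eq_mul] }
        map_add' := fun E₁ E₂ => LinearMap.ext fun G => by
          simp only [LinearMap.coe_mk, AddHom.coe_mk, LinearMap.add_apply]
          rw [show ((E₁ + E₂ : V₂) : MvPolynomial (Fin n) k)
            = (E₁ : MvPolynomial (Fin n) k) + E₂ from rfl, contract_add_left,
            MvPolynomial.coeff_add]
        map_smul' := fun c E => LinearMap.ext fun G => by
          simp only [LinearMap.coe_mk, AddHom.coe_mk, RingHom.id_apply, LinearMap.smul_apply,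
            smul_eq_mul]
          rw [show ((c • E : V₂) : MvPolynomial (Fin n) k) = c • (E : MvPolynomial (Fin n) k)
            from rfl, contract_smul_left, MvPolynomial.coeff_smul, smul_eq_mul] }
    have hBinj : Function.Injective B := by
      rw [← LinearMap.ker_eq_bot, LinearMap.ker_eq_bot']
      intro E hE0
      by_contra hne
      have hE1 : (E : MvPolynomial (Fin n) k) ≠ 0 := fun h => hne (Subtype.ext h)
      obtain ⟨s, hs⟩ := MvPolynomial.support_nonempty.mpr hE1
      have hdeg : s.degree = e := homog_degree E.2 (MvPolynomial.mem_support_iff.mp hs)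
      have h3 := LinearMap.congr_fun hE0
        ⟨monomial s 1, MvPolynomial.isHomogeneous_monomial 1 hdeg⟩
      simp only [LinearMap.zero_apply] at h3
      rw [show (B E) ⟨monomial s 1, MvPolynomial.isHomogeneous_monomial 1 hdeg⟩
          = (contract E.1 (monomial s (1 : k))).coeff 0 from rfl,
        contract_monomial_right E.2 hdeg, MvPolynomial.coeff_zero_C] at h3
      exact mul_ne_zero (MvPolynomial.mem_support_iff.mp hs) (factorial_prod_ne_zero s) h3
    have hBsurj : Function.Surjective B :=
      (LinearMap.injective_iff_surjective_of_finrank_eq_finrank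
        (Subspace.dual_finrank_eq).symm).mp hBinj
    have hx : (linForm a ^ e).IsHomogeneous e := by
      have := (linForm_isHomogeneous a).pow e
      rwa [one_mul] at this
    suffices hmem : (⟨linForm a ^ e, hx⟩ : V₂) ∈ LinearMap.range φ by
      obtain ⟨D, hD⟩ := hmem
      exact ⟨D.1, D.2, congrArg Subtype.val hD⟩
    rw [← Subspace.dualAnnihilator_dualCoannihilator_eq (W := LinearMap.range φ),
      Submodule.mem_dualCoannihilator]
    intro f hf
    obtain ⟨E, rfl⟩ := hBsurj f
    rw [Submodule.mem_dualAnnihilator] at hf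
    have hEF : contract E.1 F = 0 := by
      by_contra h0
      have hh : (contract E.1 F).IsHomogeneous (d - e) := contract_isHomogeneous E.2 hF
      obtain ⟨D, hDh, hDne⟩ := exists_contract_ne hh h0
      apply hDne
      have h2 := hf (φ ⟨D, hDh⟩) ⟨⟨D, hDh⟩, rfl⟩
      rw [show (B E) (φ ⟨D, hDh⟩) = (contract E.1 (contract D F)).coeff 0 from rfl,
        contract_comm] at h2
      exact h2
    have hav : eval a E.1 = 0 := hyp E.1 E.2 hEF
    show (contract E.1 (linForm a ^ e)).coeff 0 = 0
    rw [contract_linpow a E.2, MvPolynomial.coeff_zero_C, hav, mul_zero]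
  · rintro ⟨D, hD, hDF⟩ E hE hEF
    have h1 : contract E (linForm a ^ e) = 0 := by
      rw [← hDF, ← contract_comm, hEF, contract_zero_right]
    rw [contract_linpow a hE] at h1
    have h2 := MvPolynomial.C_eq_zero.mp h1
    rcases mul_eq_zero.mp h2 with h | h
    · exact absurd h hfact
    · exact h
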